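/- Let Ω ⊆ ℝ^d be an open set and μ a positive Radon measure on ℝ^d such that (Ω, μ) is a spectral pair, with ℱ : L²(Ω) → L²(μ) the isometric isomorphism extending f ↦ f̂. For t ∈ ℝ^d, let Û(t) be the unitary operator on L²(μ) given by (Û(t)g)(λ) = e^{2πi λ·t} g(λ), and define U(t) := ℱ^{−1} ∘ Û(t) ∘ ℱ on L²(Ω). Then (U(t))_{t∈ℝ^d} is a strongly continuous unitary group and a group of local translations on Ω. -/

import Mathlib

open MeasureTheory

noncomputable def negExp (d : ℕ) (lam x : Fin d → ℝ) : ℂ :=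
  Complex.exp ((((-2) * Real.pi * (∑ i, lam i * x i) : ℝ) : ℂ) * Complex.I)

def IsSpectralPair (d : ℕ) (Ω : Set (Fin d → ℝ)) (μ : Measure (Fin d → ℝ)) : Prop :=
  (∀ f : (Fin d → ℝ) → ℂ, Integrable f (volume.restrict Ω) →
      MemLp f 2 (volume.restrict Ω) →
      MemLp (fun lam => ∫ x in Ω, f x * negExp d lam x) 2 μ ∧
      eLpNorm (fun lam => ∫ x in Ω, f x * negExp d lam x) 2 μ
        = eLpNorm f 2 (volume.restrict Ω)) ∧
  Dense {g : Lp ℂ 2 μ | ∃ f : (Fin d → ℝ) → ℂ,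
      Integrable f (volume.restrict Ω) ∧ MemLp f 2 (volume.restrict Ω) ∧
      (g : (Fin d → ℝ) → ℂ) =ᵐ[μ] fun lam => ∫ x in Ω, f x * negExp d lam x}

lemma sum_mul_add {d : ℕ} (lam s t : Fin d → ℝ) :
    (∑ i, lam i * (s + t) i) = (∑ i, lam i * s i) + (∑ i, lam i * t i) := by
  simp [Pi.add_apply, mul_add, Finset.sum_add_distrib]

lemma negExp_add (d : ℕ) (lam x t : Fin d → ℝ) :
    negExp d lam (x + t) = negExp d lam t * negExp d lam x := by
  unfold negExp
  rw [← Complex.exp_add]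
  congr 1
  rw [sum_mul_add]
  push_cast
  ring

lemma conj_negExp (d : ℕ) (lam t : Fin d → ℝ) :
    (starRingEnd ℂ) (negExp d lam t)
      = Complex.exp (((2 * Real.pi * (∑ i, lam i * t i) : ℝ) : ℂ) * Complex.I) := by
  unfold negExp
  rw [← Complex.exp_conj]
  congr 1
  rw [map_mul, Complex.conj_I, Complex.conj_ofReal]
  push_cast
  ring

lemma norm_exp_I (r : ℝ) : ‖Complex.exp ((r : ℂ) * Complex.I)‖ = 1 := by
  rw [Complex.norm_exp_ofReal_mul_I]

lemma nnnorm_exp_I (r : ℝ) : ‖Complex.exp ((r : ℂ) * Complex.I)‖₊ = 1 :=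
  NNReal.coe_injective (by simp [coe_nnnorm, norm_exp_I])

lemma ennrpow_two (x : ENNReal) : x ^ (2 : ℝ) = x ^ (2 : ℕ) := by
  rw [← ENNReal.rpow_natCast]
  norm_num

noncomputable def Efun (d : ℕ) (t lam : Fin d → ℝ) : ℂ :=
  Complex.exp (((2 * Real.pi * (∑ i, lam i * t i) : ℝ) : ℂ) * Complex.I)

lemma Efun_def (d : ℕ) (t lam : Fin d → ℝ) :
    Efun d t lam = Complex.exp (((2 * Real.pi * (∑ i, lam i * t i) : ℝ) : ℂ) * Complex.I) := rfl

-- continuity core lemma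
lemma cont_core {d : ℕ} {μ : Measure (Fin d → ℝ)} (g : (Fin d → ℝ) → ℂ)
    (hgm : StronglyMeasurable g) (hg2 : eLpNorm g 2 μ < ⊤) (s : Fin d → ℝ) :
    Filter.Tendsto (fun t : Fin d → ℝ =>
      (eLpNorm (fun lam => (Efun d t lam - Efun d s lam) * g lam) 2 μ).toReal)
      (nhds s) (nhds 0) := by
  set E : (Fin d → ℝ) → (Fin d → ℝ) → ℂ := Efun d with hE
  have hEcont1 : ∀ t, Continuous fun lam => E t lam := by
    intro t
    rw [hE]; unfold Efun
    apply Complex.continuous_exp.comp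
    apply Continuous.mul _ continuous_const
    apply Complex.continuous_ofReal.comp
    exact (continuous_const.mul (continuous_finset_sum _ fun i _ =>
      ((continuous_apply i).mul continuous_const)))
  have hEcont2 : ∀ lam, Continuous fun t => E t lam := by
    intro lam
    unfold E; unfold Efun
    apply Complex.continuous_exp.comp
    apply Continuous.mul _ continuous_const
    apply Complex.continuous_ofReal.comp
    exact (continuous_const.mul (continuous_finset_sum _ fun i _ =>
      (continuous_const.mul (continuous_apply i))))
  have hEnorm : ∀ t lam, ‖E t lam‖₊ = 1 := fun t lam => nnnorm_exp_I _
  -- the lintegral of the square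
  have hI : Filter.Tendsto (fun t : Fin d → ℝ =>
      ∫⁻ lam, ((‖(E t lam - E s lam) * g lam‖₊ : ENNReal)) ^ (2 : ℕ) ∂μ)
      (nhds s) (nhds 0) := by
    have h0' : (0 : ENNReal) = ∫⁻ _, (0 : ENNReal) ∂μ := by simp
    rw [h0']
    apply tendsto_lintegral_filter_of_dominated_convergence
      (fun lam => ((2 : ENNReal) * (‖g lam‖₊ : ENNReal)) ^ (2 : ℕ))
    · apply Filter.Eventually.of_forall
      intro t
      apply Measurable.pow_const
      refine Measurable.enorm (f := fun lam => (E t lam - E s lam) * g lam) ?_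
      exact (((hEcont1 t).sub (hEcont1 s)).measurable.mul hgm.measurable)
    · apply Filter.Eventually.of_forall
      intro t
      apply Filter.Eventually.of_forall
      intro lam
      apply pow_le_pow_left' _ 2
      calc (‖(E t lam - E s lam) * g lam‖₊ : ENNReal)
          = (‖E t lam - E s lam‖₊ : ENNReal) * ‖g lam‖₊ := by
            rw [nnnorm_mul]; push_cast; ring
        _ ≤ 2 * ‖g lam‖₊ := by
            apply mul_le_mul_left
            have : ‖E t lam - E s lam‖₊ ≤ 2 := by
              calc ‖E t lam - E s lam‖₊ ≤ ‖E t lam‖₊ + ‖E s lam‖₊ := nnnorm_sub_le _ _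
                _ = 2 := by rw [hEnorm, hEnorm]; norm_num
            exact_mod_cast this
    · -- finiteness of the bound integral
      have hfin : ∫⁻ lam, ((‖g lam‖₊ : ENNReal)) ^ (2 : ℕ) ∂μ < ⊤ := by
        have := lintegral_rpow_enorm_lt_top_of_eLpNorm_lt_top
          (by norm_num : (2 : ENNReal) ≠ 0) (by norm_num : (2 : ENNReal) ≠ ⊤) hg2
        simp [ennrpow_two] at this
        exact this
      have : ∫⁻ lam, ((2 : ENNReal) * (‖g lam‖₊ : ENNReal)) ^ (2 : ℕ) ∂μ
          = 4 * ∫⁻ lam, ((‖g lam‖₊ : ENNReal)) ^ (2 : ℕ) ∂μ := by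
        rw [← lintegral_const_mul 4 ((hgm.measurable.nnnorm.coe_nnreal_ennreal).pow_const 2)]
        congr 1
        funext lam
        rw [mul_pow]
        norm_num
      rw [this]
      exact (ENNReal.mul_lt_top (by norm_num) hfin).ne
    · apply Filter.Eventually.of_forall
      intro lam
      have hz : Filter.Tendsto (fun t => (E t lam - E s lam) * g lam) (nhds s) (nhds 0) := by
        apply Continuous.tendsto'
        · exact ((hEcont2 lam).sub continuous_const).mul continuous_const
        · simp
      have h1 : Filter.Tendsto (fun t => (‖(E t lam - E s lam) * g lam‖₊ : ENNReal)) (nhds s) (nhds 0) := by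
        rw [← ENNReal.coe_zero]
        apply ENNReal.tendsto_coe.2
        have h0 : (0 : NNReal) = ‖(0 : ℂ)‖₊ := by simp
        rw [h0]
        exact (continuous_nnnorm.tendsto (0 : ℂ)).comp hz
      have hpow := ((ENNReal.continuous_pow 2).tendsto (0 : ENNReal)).comp h1
      have h00 : ((0 : ENNReal)) ^ (2 : ℕ) = 0 := by norm_num
      rw [h00] at hpow
      exact hpow
  -- convert to eLpNorm
  have heq : ∀ t : Fin d → ℝ, eLpNorm (fun lam => (E t lam - E s lam) * g lam) 2 μ
      = (∫⁻ lam, ((‖(E t lam - E s lam) * g lam‖₊ : ENNReal)) ^ (2 : ℕ) ∂μ) ^ ((1:ℝ)/2) := by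
    intro t
    rw [eLpNorm_eq_lintegral_rpow_enorm_toReal (by norm_num : (2 : ENNReal) ≠ 0)
      (by norm_num : (2 : ENNReal) ≠ ⊤)]
    norm_num [ennrpow_two]
    rfl
  have main := hI.ennrpow_const ((1:ℝ)/2)
  rw [ENNReal.zero_rpow_of_pos (by norm_num)] at main
  have main2 : Filter.Tendsto (fun t : Fin d → ℝ =>
      eLpNorm (fun lam => (E t lam - E s lam) * g lam) 2 μ) (nhds s) (nhds 0) := by
    simp only [heq]
    exact main
  have := (ENNReal.tendsto_toReal (by simp : (0:ENNReal) ≠ ⊤)).comp main2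
  exact this


theorem statement2 (d : ℕ) (Ω : Set (Fin d → ℝ)) (hΩ : IsOpen Ω)
    (μ : Measure (Fin d → ℝ)) [μ.Regular]
    (hpair : IsSpectralPair d Ω μ)
    (F : Lp ℂ 2 (volume.restrict Ω) ≃ₗᵢ[ℂ] Lp ℂ 2 μ)
    (hF : ∀ f : Lp ℂ 2 (volume.restrict Ω),
      Integrable (f : (Fin d → ℝ) → ℂ) (volume.restrict Ω) →
      (F f : (Fin d → ℝ) → ℂ) =ᵐ[μ] fun lam => ∫ x in Ω, f x * negExp d lam x)
    (U : (Fin d → ℝ) → Lp ℂ 2 (volume.restrict Ω) → Lp ℂ 2 (volume.restrict Ω))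
    (hU : ∀ t f, (F (U t f) : (Fin d → ℝ) → ℂ) =ᵐ[μ]
      fun lam => Complex.exp (((2 * Real.pi * (∑ i, lam i * t i) : ℝ) : ℂ) * Complex.I)
        * (F f : (Fin d → ℝ) → ℂ) lam) :
    (∀ t, IsLinearMap ℂ (U t)) ∧
    (∀ t f, ‖U t f‖ = ‖f‖) ∧
    (∀ t, Function.Bijective (U t)) ∧
    (U 0 = id) ∧
    (∀ s t f, U (s + t) f = U s (U t f)) ∧
    (∀ f, Continuous fun t => U t f) ∧
    (∀ V : Set (Fin d → ℝ), IsOpen V → V ⊆ Ω →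
      ∀ t : Fin d → ℝ, (fun x => x + t) '' V ⊆ Ω →
      ∀ f : Lp ℂ 2 (volume.restrict Ω), ∀ᵐ x ∂(volume.restrict V),
        (U t f : (Fin d → ℝ) → ℂ) x = (f : (Fin d → ℝ) → ℂ) (x + t)) := by
  classical
  have key : ∀ g h : Lp ℂ 2 (volume.restrict Ω), ((F g : (Fin d → ℝ) → ℂ) =ᵐ[μ] (F h : (Fin d → ℝ) → ℂ)) → g = h :=
    fun g h hgh => F.injective (Lp.ext hgh)
  -- additivity
  have hadd : ∀ t f g, U t (f + g) = U t f + U t g := by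
    intro t f g
    refine key _ _ ?_
    have h4 : ⇑(F (f + g)) =ᵐ[μ] ⇑(F f) + ⇑(F g) := by
      rw [map_add]; exact Lp.coeFn_add _ _
    have h5 : ⇑(F (U t f + U t g)) =ᵐ[μ] ⇑(F (U t f)) + ⇑(F (U t g)) := by
      rw [map_add]; exact Lp.coeFn_add _ _
    filter_upwards [hU t (f + g), hU t f, hU t g, h4, h5] with lam e1 e2 e3 e4 e5
    simp only [e1, e5, Pi.add_apply, e2, e3, e4]
    ring
  have hsmul : ∀ t (c : ℂ) f, U t (c • f) = c • U t f := by
    intro t c f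
    refine key _ _ ?_
    have h4 : ⇑(F (c • f)) =ᵐ[μ] c • ⇑(F f) := by
      rw [_root_.map_smul]; exact Lp.coeFn_smul _ _
    have h5 : ⇑(F (c • U t f)) =ᵐ[μ] c • ⇑(F (U t f)) := by
      rw [_root_.map_smul]; exact Lp.coeFn_smul _ _
    filter_upwards [hU t (c • f), hU t f, h4, h5] with lam e1 e2 e4 e5
    simp only [e1, e5, Pi.smul_apply, smul_eq_mul, e2, e4]
    ring
  have hlin : ∀ t, IsLinearMap ℂ (U t) := fun t => ⟨hadd t, hsmul t⟩
  -- norm preservation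
  have hnorm : ∀ t f, ‖U t f‖ = ‖f‖ := by
    intro t f
    rw [← F.norm_map (U t f), ← F.norm_map f, Lp.norm_def, Lp.norm_def]
    congr 1
    rw [eLpNorm_congr_ae (hU t f)]
    exact eLpNorm_congr_norm_ae (Filter.Eventually.of_forall fun lam => by
      rw [norm_mul, norm_exp_I, one_mul])
  -- U 0 = id
  have hU0 : U 0 = id := by
    funext f
    refine key _ _ ?_
    filter_upwards [hU 0 f] with lam e1
    simp [e1]
  -- group law
  have hgrp : ∀ s t f, U (s + t) f = U s (U t f) := by
    intro s t f
    refine key _ _ ?_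
    filter_upwards [hU (s + t) f, hU s (U t f), hU t f] with lam e1 e2 e3
    simp only [e1, e2, e3]
    have hsumc : ((2 * Real.pi * (∑ i, lam i * (s + t) i) : ℝ) : ℂ) * Complex.I
        = ((2 * Real.pi * (∑ i, lam i * s i) : ℝ) : ℂ) * Complex.I
          + ((2 * Real.pi * (∑ i, lam i * t i) : ℝ) : ℂ) * Complex.I := by
      rw [sum_mul_add]
      push_cast
      ring
    rw [hsumc, Complex.exp_add]
    ring
  -- bijectivity
  have hbij : ∀ t, Function.Bijective (U t) := by
    intro t
    have h1 : ∀ f, U t (U (-t) f) = f := fun f => by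
      rw [← hgrp, add_neg_cancel, hU0, id_eq]
    have h2 : ∀ f, U (-t) (U t f) = f := fun f => by
      rw [← hgrp, neg_add_cancel, hU0, id_eq]
    exact Function.bijective_iff_has_inverse.mpr ⟨U (-t), h2, h1⟩
  refine ⟨hlin, hnorm, hbij, hU0, hgrp, ?_, ?_⟩
  · -- strong continuity
    intro f
    rw [continuous_iff_continuousAt]
    intro s
    obtain ⟨g', hg'meas, hgg'⟩ : ∃ g', StronglyMeasurable g' ∧ ⇑(F f) =ᵐ[μ] g' :=
      ⟨(Lp.aestronglyMeasurable (F f)).mk _,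
        (Lp.aestronglyMeasurable (F f)).stronglyMeasurable_mk,
        (Lp.aestronglyMeasurable (F f)).ae_eq_mk⟩
    have hg2 : eLpNorm g' 2 μ < ⊤ := by
      rw [← eLpNorm_congr_ae hgg']
      exact (Lp.memLp (F f)).2
    have hnorm_eq : ∀ t, ‖U t f - U s f‖
        = (eLpNorm (fun lam => (Efun d t lam - Efun d s lam) * g' lam) 2 μ).toReal := by
      intro t
      rw [← F.norm_map, map_sub, Lp.norm_def]
      congr 1
      apply eLpNorm_congr_ae
      filter_upwards [Lp.coeFn_sub (F (U t f)) (F (U s f)), hU t f, hU s f, hgg']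
        with lam e0 e1 e2 e3
      rw [e0, Pi.sub_apply, e1, e2, Efun_def, Efun_def, e3]
      ring
    have hmain := cont_core g' hg'meas hg2 s
    show Filter.Tendsto (fun t => U t f) (nhds s) (nhds (U s f))
    rw [tendsto_iff_norm_sub_tendsto_zero]
    simp only [hnorm_eq]
    exact hmain
  · -- local translations
    intro V hV hVΩ t hVt f
    have hTmp : MeasurePreserving (fun x : Fin d → ℝ => x + t) volume volume :=
      measurePreserving_add_right volume t
    have hTemb : MeasurableEmbedding (fun x : Fin d → ℝ => x + t) :=
      (Homeomorph.addRight t).measurableEmbedding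
    have hTinj : Function.Injective (fun x : Fin d → ℝ => x + t) :=
      fun a b hab => by simpa using congrArg (fun y => y - t) hab
    have himg : ∀ A : Set (Fin d → ℝ),
        (fun x => x + t) '' A = (fun y => y + (-t)) ⁻¹' A := by
      intro A
      ext y
      constructor
      · rintro ⟨x, hx, rfl⟩
        simpa using hx
      · intro hy
        exact ⟨y + (-t), hy, by simp⟩
    have hvol : ∀ A : Set (Fin d → ℝ), MeasurableSet A →
        volume ((fun x => x + t) '' A) = volume A := by
      intro A hA
      rw [himg]
      exact (measurePreserving_add_right volume (-t)).measure_preimage hA.nullMeasurableSet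
    have hmap : ∀ A : Set (Fin d → ℝ), MeasurableSet A →
        Measure.map (fun x => x + t) (volume.restrict A)
          = volume.restrict ((fun x => x + t) '' A) := by
      intro A hA
      have hA' : MeasurableSet ((fun x => x + t) '' A) := hTemb.measurableSet_image' hA
      have h2 : (fun x : Fin d → ℝ => x + t) ⁻¹' ((fun x => x + t) '' A) = A :=
        Set.preimage_image_eq _ hTinj
      calc Measure.map (fun x : Fin d → ℝ => x + t) (volume.restrict A)
          = Measure.map (fun x => x + t)
            (volume.restrict ((fun x : Fin d → ℝ => x + t) ⁻¹' ((fun x => x + t) '' A))) := by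
            rw [h2]
        _ = (Measure.map (fun x : Fin d → ℝ => x + t) volume).restrict
            ((fun x => x + t) '' A) := (Measure.restrict_map hTmp.measurable hA').symm
        _ = volume.restrict ((fun x => x + t) '' A) := by rw [hTmp.map_eq]
    have hIntOn : ∀ (g : Lp ℂ 2 (volume.restrict Ω)) (A : Set (Fin d → ℝ)),
        MeasurableSet A → A ⊆ Ω → volume A < ⊤ →
        Integrable (⇑g) (volume.restrict A) := by
      intro g A hA hAΩ hAfin
      have h1 : MemLp (⇑g) 2 ((volume.restrict Ω).restrict A) := (Lp.memLp g).restrict A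
      rw [Measure.restrict_restrict hA, Set.inter_eq_self_of_subset_left hAΩ] at h1
      have : IsFiniteMeasure (volume.restrict A) := ⟨by rwa [Measure.restrict_apply_univ]⟩
      exact h1.integrable one_le_two
    have hIntOnT : ∀ (g : Lp ℂ 2 (volume.restrict Ω)) (A : Set (Fin d → ℝ)),
        MeasurableSet A → ((fun x => x + t) '' A) ⊆ Ω → volume A < ⊤ →
        Integrable (fun x => (g : (Fin d → ℝ) → ℂ) (x + t)) (volume.restrict A) := by
      intro g A hA hAΩ hAfin
      have hA' : MeasurableSet ((fun x => x + t) '' A) := hTemb.measurableSet_image' hA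
      have hInt : Integrable (⇑g) (volume.restrict ((fun x => x + t) '' A)) :=
        hIntOn g _ hA' hAΩ (by rw [hvol A hA]; exact hAfin)
      rw [← hmap A hA] at hInt
      exact hTemb.integrable_map_iff.mp hInt
    have hchg : ∀ (A : Set (Fin d → ℝ)), ∀ g : (Fin d → ℝ) → ℂ,
        ∫ x in (fun x => x + t) '' A, g x ∂volume = ∫ x in A, g (x + t) ∂volume := by
      intro A g
      have h4 := hTemb.setIntegral_map (μ := volume) g ((fun x => x + t) '' A)
      rw [hTmp.map_eq, Set.preimage_image_eq _ hTinj] at h4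
      exact h4
    have hres_fin : ∀ C : Set (Fin d → ℝ), volume C < ⊤ → (volume.restrict Ω) C < ⊤ :=
      fun C hC => lt_of_le_of_lt (Measure.restrict_apply_le Ω C) hC
    have hcore : ∀ A : Set (Fin d → ℝ), MeasurableSet A → A ⊆ V → volume A < ⊤ →
        ∫ x in A, (U t f : (Fin d → ℝ) → ℂ) x ∂volume
          = ∫ x in A, (f : (Fin d → ℝ) → ℂ) (x + t) ∂volume := by
      intro A hA hAV hAfin
      have hAΩ : A ⊆ Ω := hAV.trans hVΩ
      set B : Set (Fin d → ℝ) := (fun x => x + t) '' A with hB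
      have hBΩ : B ⊆ Ω := (Set.image_mono hAV).trans hVt
      have hB' : MeasurableSet B := hTemb.measurableSet_image' hA
      have hBfin : volume B < ⊤ := by rw [hB, hvol A hA]; exact hAfin
      set φ : (Fin d → ℝ) → ℂ := A.indicator (fun _ => (1:ℂ)) with hφ
      set ψ : (Fin d → ℝ) → ℂ := B.indicator (fun _ => (1:ℂ)) with hψ
      have hφmem : MemLp φ 2 (volume.restrict Ω) :=
        memLp_indicator_const 2 hA 1 (Or.inr (hres_fin A hAfin).ne)
      have hψmem : MemLp ψ 2 (volume.restrict Ω) :=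
        memLp_indicator_const 2 hB' 1 (Or.inr (hres_fin B hBfin).ne)
      have hφint : Integrable φ (volume.restrict Ω) :=
        (integrable_indicator_iff hA).2 (integrableOn_const (hres_fin A hAfin).ne)
      have hψint : Integrable ψ (volume.restrict Ω) :=
        (integrable_indicator_iff hB').2 (integrableOn_const (hres_fin B hBfin).ne)
      set φL : Lp ℂ 2 (volume.restrict Ω) := hφmem.toLp φ with hφL
      set ψL : Lp ℂ 2 (volume.restrict Ω) := hψmem.toLp ψ with hψL
      have hφcoe : ⇑φL =ᵐ[volume.restrict Ω] φ := hφmem.coeFn_toLp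
      have hψcoe : ⇑ψL =ᵐ[volume.restrict Ω] ψ := hψmem.coeFn_toLp
      have hφLint : Integrable (⇑φL) (volume.restrict Ω) := hφint.congr hφcoe.symm
      have hψLint : Integrable (⇑ψL) (volume.restrict Ω) := hψint.congr hψcoe.symm
      have hFφA : ⇑(F φL) =ᵐ[μ] fun lam => ∫ x in A, negExp d lam x ∂volume := by
        refine (hF φL hφLint).trans (Filter.Eventually.of_forall fun lam => ?_)
        beta_reduce
        have h1 : ∫ x in Ω, (φL : (Fin d → ℝ) → ℂ) x * negExp d lam x
            = ∫ x in Ω, φ x * negExp d lam x :=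
          integral_congr_ae (by filter_upwards [hφcoe] with x hx; rw [hx])
        rw [h1]
        have h2 : ∀ x, φ x * negExp d lam x = A.indicator (fun y => negExp d lam y) x := by
          intro x
          by_cases hx : x ∈ A
          · simp [hφ, Set.indicator_of_mem hx]
          · simp [hφ, Set.indicator_of_notMem hx]
        simp_rw [h2]
        rw [integral_indicator hA, Measure.restrict_restrict hA,
          Set.inter_eq_self_of_subset_left hAΩ]
      have hFψA : ⇑(F ψL) =ᵐ[μ] fun lam =>
          negExp d lam t * ∫ x in A, negExp d lam x ∂volume := by
        refine (hF ψL hψLint).trans (Filter.Eventually.of_forall fun lam => ?_)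
        beta_reduce
        have h1 : ∫ x in Ω, (ψL : (Fin d → ℝ) → ℂ) x * negExp d lam x
            = ∫ x in Ω, ψ x * negExp d lam x :=
          integral_congr_ae (by filter_upwards [hψcoe] with x hx; rw [hx])
        rw [h1]
        have h2 : ∀ x, ψ x * negExp d lam x = B.indicator (fun y => negExp d lam y) x := by
          intro x
          by_cases hx : x ∈ B
          · simp [hψ, Set.indicator_of_mem hx]
          · simp [hψ, Set.indicator_of_notMem hx]
        simp_rw [h2]
        rw [integral_indicator hB', Measure.restrict_restrict hB',
          Set.inter_eq_self_of_subset_left hBΩ, hB, hchg A]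
        simp_rw [negExp_add d lam]
        rw [integral_const_mul]
      have hinner1 : (inner ℂ φL (U t f) : ℂ)
          = ∫ x in A, (U t f : (Fin d → ℝ) → ℂ) x ∂volume := by
        rw [L2.inner_def]
        have h1 : (fun x => (inner ℂ ((φL : (Fin d → ℝ) → ℂ) x)
              ((U t f : (Fin d → ℝ) → ℂ) x) : ℂ))
            =ᵐ[volume.restrict Ω] A.indicator (fun y => (U t f : (Fin d → ℝ) → ℂ) y) := by
          filter_upwards [hφcoe] with x hx
          rw [RCLike.inner_apply, hx]
          by_cases hxA : x ∈ A
          · simp [hφ, Set.indicator_of_mem hxA]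
          · simp [hφ, Set.indicator_of_notMem hxA]
        rw [integral_congr_ae h1, integral_indicator hA, Measure.restrict_restrict hA,
          Set.inter_eq_self_of_subset_left hAΩ]
      have hinner2 : (inner ℂ ψL f : ℂ)
          = ∫ x in A, (f : (Fin d → ℝ) → ℂ) (x + t) ∂volume := by
        rw [L2.inner_def]
        have h1 : (fun x => (inner ℂ ((ψL : (Fin d → ℝ) → ℂ) x)
              ((f : (Fin d → ℝ) → ℂ) x) : ℂ))
            =ᵐ[volume.restrict Ω] B.indicator (fun y => (f : (Fin d → ℝ) → ℂ) y) := by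
          filter_upwards [hψcoe] with x hx
          rw [RCLike.inner_apply, hx]
          by_cases hxB : x ∈ B
          · simp [hψ, Set.indicator_of_mem hxB]
          · simp [hψ, Set.indicator_of_notMem hxB]
        rw [integral_congr_ae h1, integral_indicator hB', Measure.restrict_restrict hB',
          Set.inter_eq_self_of_subset_left hBΩ, hB, hchg A]
      have hmid : (inner ℂ (F φL) (F (U t f)) : ℂ) = inner ℂ (F ψL) (F f) := by
        rw [L2.inner_def, L2.inner_def]
        apply integral_congr_ae
        filter_upwards [hFφA, hFψA, hU t f] with lam a b c
        simp only [RCLike.inner_apply, a, b, c, map_mul, conj_negExp]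
        ring
      calc ∫ x in A, (U t f : (Fin d → ℝ) → ℂ) x ∂volume
          = inner ℂ φL (U t f) := hinner1.symm
        _ = inner ℂ (F φL) (F (U t f)) := (F.inner_map_map φL (U t f)).symm
        _ = inner ℂ (F ψL) (F f) := hmid
        _ = inner ℂ ψL f := F.inner_map_map ψL f
        _ = ∫ x in A, (f : (Fin d → ℝ) → ℂ) (x + t) ∂volume := hinner2
    refine ae_eq_of_forall_setIntegral_eq_of_sigmaFinite (μ := volume.restrict V) ?_ ?_ ?_
    · intro s hs hsfin
      rw [IntegrableOn, Measure.restrict_restrict hs]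
      exact hIntOn (U t f) (s ∩ V) (hs.inter hV.measurableSet)
        ((Set.inter_subset_right).trans hVΩ)
        (by rw [← Measure.restrict_apply hs]; exact hsfin)
    · intro s hs hsfin
      rw [IntegrableOn, Measure.restrict_restrict hs]
      exact hIntOnT f (s ∩ V) (hs.inter hV.measurableSet)
        ((Set.image_mono (Set.inter_subset_right)).trans hVt)
        (by rw [← Measure.restrict_apply hs]; exact hsfin)
    · intro s hs hsfin
      rw [Measure.restrict_restrict hs]
      exact hcore (s ∩ V) (hs.inter hV.measurableSet) (Set.inter_subset_right)
        (by rw [← Measure.restrict_apply hs]; exact hsfin)
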